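/- arXiv:2205.11719 — 4 statements merged into one kernel-verified Lean document; each statement's English description precedes it below -/
import Mathlib

section
/- Let c be a point of ℝ³ (the camera position) and X ⊆ ℝ³ an object model, with occlusion region O(X) = {x : ∃ α ∈ (0,1), α·(x − c) + c ∈ X}. If X is convex, then O(X) is convex; that is, the shadow of a convex object from a point camera is convex. -/
/-- The shadow of a convex object from a point camera is convex. -/
theorem occlusion_convex
    (c : EuclideanSpace ℝ (Fin 3)) (X : Set (EuclideanSpace ℝ (Fin 3))) (hX : Convex ℝ X) :
    Convex ℝ {x : EuclideanSpace ℝ (Fin 3) | ∃ α ∈ Set.Ioo (0 : ℝ) 1, α • (x - c) + c ∈ X} := by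
  rintro x ⟨α, ⟨hα0, hα1⟩, hx⟩ y ⟨β, ⟨hβ0, hβ1⟩, hy⟩ a b ha hb hab
  obtain rfl : b = 1 - a := by linarith
  set d : ℝ := a * β + (1 - a) * α with hd
  have hd0 : 0 < d := by
    rcases lt_or_eq_of_le ha with h | h
    · have h1 : 0 < a * β := mul_pos h hβ0
      have h2 : 0 ≤ (1 - a) * α := mul_nonneg hb hα0.le
      linarith
    · subst h; nlinarith
  have hd' : d ≠ 0 := hd0.ne'
  refine ⟨α * β / d, ⟨by positivity, ?_⟩, ?_⟩
  · rw [div_lt_one hd0]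
    rcases lt_or_eq_of_le ha with h | h
    · nlinarith [mul_pos (mul_pos h hβ0) (sub_pos.2 hα1),
        mul_nonneg (mul_nonneg hb hα0.le) (sub_pos.2 hβ1).le]
    · subst h; nlinarith [mul_pos hα0 (sub_pos.2 hβ1)]
  · have key : (α * β / d) • (a • x + (1 - a) • y - c) + c
        = (a * β / d) • (α • (x - c) + c) + ((1 - a) * α / d) • (β • (y - c) + c) := by
      match_scalars <;> (field_simp; try ring)
    rw [key]
    exact hX hx hy (by positivity) (by positivity) (by field_simp; exact hd.symm)
end

section
/- Let c be a point of ℝ³ (the camera position) and X ⊆ ℝ³ an object model, with occlusion region O(X) = {x : ∃ α ∈ (0,1), α·(x − c) + c ∈ X}. If X is compact and c ∉ X, then the union X ∪ O(X) (the object together with its shadow) is a closed subset of ℝ³. -/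
open Metric Filter Topology

/-- For a compact object not containing the camera, the object together with its shadow
is a closed set. -/
theorem object_union_occlusion_isClosed
    (c : EuclideanSpace ℝ (Fin 3)) (X : Set (EuclideanSpace ℝ (Fin 3)))
    (hX : IsCompact X) (hc : c ∉ X) :
    IsClosed
      (X ∪ {x : EuclideanSpace ℝ (Fin 3) | ∃ α ∈ Set.Ioo (0 : ℝ) 1, α • (x - c) + c ∈ X}) := by
  rcases X.eq_empty_or_nonempty with rfl | hne
  · simp
  have hXc : IsClosed X := hX.isClosed
  have hε : 0 < infDist c X := by
    rw [← hXc.notMem_iff_infDist_pos hne]; exact hc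
  set ε := infDist c X with hεdef
  have hset : (X ∪ {x : EuclideanSpace ℝ (Fin 3) | ∃ α ∈ Set.Ioo (0 : ℝ) 1, α • (x - c) + c ∈ X})
      = {x | ∃ α ∈ Set.Ioc (0 : ℝ) 1, α • (x - c) + c ∈ X} := by
    ext x
    constructor
    · rintro (hx | ⟨α, hα, hαx⟩)
      · exact ⟨1, ⟨one_pos, le_refl 1⟩, by simpa⟩
      · exact ⟨α, ⟨hα.1, hα.2.le⟩, hαx⟩
    · rintro ⟨α, ⟨h0, h1⟩, hαx⟩
      rcases eq_or_lt_of_le h1 with rfl | h1'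
      · left; simpa using hαx
      · right; exact ⟨α, ⟨h0, h1'⟩, hαx⟩
  rw [hset]
  apply IsSeqClosed.isClosed
  intro u x hu hux
  choose α hα hmem using hu
  have hdist : ∀ n, ε ≤ α n * ‖u n - c‖ := by
    intro n
    have h := infDist_le_dist_of_mem (x := c) (hmem n)
    rw [dist_eq_norm] at h
    calc ε ≤ ‖c - (α n • (u n - c) + c)‖ := h
      _ = α n * ‖u n - c‖ := by
        rw [show c - (α n • (u n - c) + c) = -(α n • (u n - c)) by abel, norm_neg,
          norm_smul, Real.norm_eq_abs, abs_of_pos (hα n).1]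
  set M : ℝ := ‖x - c‖ + 1 with hM
  have hMpos : 0 < M := by positivity
  have hnormtend : Tendsto (fun n => ‖u n - c‖) atTop (𝓝 ‖x - c‖) :=
    (hux.sub tendsto_const_nhds).norm
  have hev : ∀ᶠ n in atTop, ε / M ≤ α n := by
    filter_upwards [hnormtend.eventually_lt_const (by linarith : ‖x - c‖ < M)] with n hn
    rw [div_le_iff₀ hMpos]
    calc ε ≤ α n * ‖u n - c‖ := hdist n
      _ ≤ α n * M := by
        exact mul_le_mul_of_nonneg_left hn.le (hα n).1.le
  have hαIcc : ∀ n, α n ∈ Set.Icc (0 : ℝ) 1 := fun n => ⟨(hα n).1.le, (hα n).2⟩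
  obtain ⟨L, hL, φ, hφmono, hφtend⟩ :=
    (isCompact_Icc (a := (0:ℝ)) (b := 1)).tendsto_subseq hαIcc
  have hLpos : 0 < L := by
    have := ge_of_tendsto hφtend ((hφmono.tendsto_atTop.eventually hev))
    calc (0:ℝ) < ε / M := div_pos hε hMpos
      _ ≤ L := this
  have htend2 : Tendsto (fun n => α (φ n) • (u (φ n) - c) + c) atTop
      (𝓝 (L • (x - c) + c)) :=
    ((hφtend.smul (((hux.comp hφmono.tendsto_atTop).sub tendsto_const_nhds))).add
      tendsto_const_nhds)
  have hmemL : L • (x - c) + c ∈ X :=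
    hXc.mem_of_tendsto htend2 (Eventually.of_forall fun n => hmem (φ n))
  exact ⟨L, ⟨hLpos, hL.2⟩, hmemL⟩
end

section
/- Let c ∈ ℝ³ be the camera position and (X_k)_{k ∈ ι} a finite family of compact object models in ℝ³. For each i, let O_i = {x : ∃ α ∈ (0,1), α·(x − c) + c ∈ X_i} and Õ_i = {x : ∃ α ∈ (0,1], α·(x − c) + c ∈ X_i ∧ ∀ β ∈ (α,1), ∀ k ≠ i, β·(x − c) + c ∉ X_k}. Then every occluded point outside the objects is directly occluded by some object: (⋃_i O_i) \ (⋃_k X_k) ⊆ ⋃_i Õ_i. -/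
/-- For a finite family of compact objects, every occluded point outside the objects is
directly occluded by some object. -/
theorem occluded_point_is_directly_occluded
    {ι : Type*} [Finite ι] (c : EuclideanSpace ℝ (Fin 3))
    (X : ι → Set (EuclideanSpace ℝ (Fin 3))) (hX : ∀ k, IsCompact (X k)) :
    (⋃ i, {x : EuclideanSpace ℝ (Fin 3) | ∃ α ∈ Set.Ioo (0 : ℝ) 1,
        α • (x - c) + c ∈ X i}) \ (⋃ k, X k) ⊆
      ⋃ i, {x : EuclideanSpace ℝ (Fin 3) | ∃ α ∈ Set.Ioc (0 : ℝ) 1,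
        α • (x - c) + c ∈ X i ∧
        ∀ β ∈ Set.Ioo α 1, ∀ k ≠ i, β • (x - c) + c ∉ X k} := by
  intro x hx
  simp only [Set.mem_diff, Set.mem_iUnion, Set.mem_setOf_eq] at hx
  obtain ⟨⟨i0, α0, hα0, hmem⟩, hnx⟩ := hx
  set g : ℝ → EuclideanSpace ℝ (Fin 3) := fun β => β • (x - c) + c with hg
  have hcont : Continuous g := by
    exact (continuous_id.smul continuous_const).add continuous_const
  have hclosed : IsClosed (⋃ k, X k) :=
    isClosed_iUnion_of_finite fun k => (hX k).isClosed
  set A : Set ℝ := Set.Icc α0 1 ∩ g ⁻¹' (⋃ k, X k) with hA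
  have hAc : IsCompact A := isCompact_Icc.inter_right (hclosed.preimage hcont)
  have hAne : A.Nonempty :=
    ⟨α0, ⟨le_refl _, hα0.2.le⟩, Set.mem_iUnion.2 ⟨i0, hmem⟩⟩
  have hsup := hAc.sSup_mem hAne
  set α := sSup A with hαdef
  obtain ⟨⟨hge, hle⟩, hmem'⟩ := hsup
  obtain ⟨i, hi⟩ := Set.mem_iUnion.1 hmem'
  simp only [Set.mem_iUnion, Set.mem_setOf_eq]
  refine ⟨i, α, ⟨lt_of_lt_of_le hα0.1 hge, hle⟩, hi, ?_⟩
  intro β hβ k _ hgβ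
  have hβA : β ∈ A :=
    ⟨⟨le_trans hge hβ.1.le, hβ.2.le⟩, Set.mem_iUnion.2 ⟨k, hgβ⟩⟩
  exact absurd (le_csSup hAc.bddAbove hβA) (not_le.2 hβ.1)
end

section
/- Let c ∈ ℝ³ be the camera position and (X_k)_{k ∈ ι} a family of pairwise disjoint object models in ℝ³. For each i, let Õ_i = {x : ∃ α ∈ (0,1], α·(x − c) + c ∈ X_i ∧ ∀ β ∈ (α,1), ∀ k ≠ i, β·(x − c) + c ∉ X_k} be the direct occlusion space of object i. Then for any point x ∉ ⋃_k X_k and any indices i ≠ j, x cannot lie in both Õ_i and Õ_j; that is, outside the objects themselves, the direct occlusion spaces of distinct objects are pairwise disjoint. -/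
/-- Outside the objects themselves, the direct occlusion spaces of distinct (pairwise
disjoint) objects are pairwise disjoint. -/
theorem direct_occlusion_pairwise_disjoint
    {ι : Type*} (c : EuclideanSpace ℝ (Fin 3)) (X : ι → Set (EuclideanSpace ℝ (Fin 3)))
    (hdisj : Pairwise fun i j => Disjoint (X i) (X j))
    (x : EuclideanSpace ℝ (Fin 3)) (hx : x ∉ ⋃ k, X k) (i j : ι) (hij : i ≠ j) :
    ¬(x ∈ {y : EuclideanSpace ℝ (Fin 3) | ∃ α ∈ Set.Ioc (0 : ℝ) 1,
          α • (y - c) + c ∈ X i ∧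
          ∀ β ∈ Set.Ioo α 1, ∀ k ≠ i, β • (y - c) + c ∉ X k} ∧
      x ∈ {y : EuclideanSpace ℝ (Fin 3) | ∃ α ∈ Set.Ioc (0 : ℝ) 1,
          α • (y - c) + c ∈ X j ∧
          ∀ β ∈ Set.Ioo α 1, ∀ k ≠ j, β • (y - c) + c ∉ X k}) := by
  rintro ⟨⟨α, hα, hXi, hi⟩, ⟨β, hβ, hXj, hj⟩⟩
  have hxone : (1 : ℝ) • (x - c) + c = x := by simp
  rcases lt_trichotomy α β with h | h | h
  · rcases lt_or_eq_of_le hβ.2 with h1 | h1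
    · exact hi β ⟨h, h1⟩ j hij.symm hXj
    · exact hx (Set.mem_iUnion.mpr ⟨j, by rwa [h1, hxone] at hXj⟩)
  · subst h
    exact (hdisj hij).le_bot ⟨hXi, hXj⟩
  · rcases lt_or_eq_of_le hα.2 with h1 | h1
    · exact hj α ⟨h, h1⟩ i hij hXi
    · exact hx (Set.mem_iUnion.mpr ⟨i, by rwa [h1, hxone] at hXi⟩)
end
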